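/- arXiv:1010.2353 — 2 statements merged into one kernel-verified Lean document; each statement's English description precedes it below -/
import Mathlib

section
/- Let f : ℝ → ℝ≥0 be a C² function that is bounded and satisfies f''(s) ≥ δ² f(s) for all s ∈ ℝ, where δ > 0. Then there exists a constant C ≥ 0 such that f(s) ≤ C e^{−δ|s|} for all s ∈ ℝ. -/
open Filter Real

/-- Key one-sided decay lemma: on `[0, ∞)` we have `f s ≤ f 0 * exp (-δ s)`. -/
lemma stmt4_aux (f : ℝ → ℝ) (δ B : ℝ) (hδ : 0 < δ)
    (hf : ContDiff ℝ 2 f)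
    (hB : ∀ s, f s ≤ B)
    (hconv : ∀ s, δ ^ 2 * f s ≤ iteratedDeriv 2 f s) :
    ∀ s, 0 ≤ s → f s ≤ f 0 * Real.exp (-δ * s) := by
  have hd1 : Differentiable ℝ f := hf.differentiable two_ne_zero
  have hcd : ContDiff ℝ 1 (deriv f) := by
    have h2 : ContDiff ℝ ((1 : ℕ) + 1) f := by exact_mod_cast hf
    exact (contDiff_succ_iff_deriv.mp h2).2.2
  have hd2 : Differentiable ℝ (deriv f) := hcd.differentiable one_ne_zero
  have hiter : ∀ s, HasDerivAt (deriv f) (iteratedDeriv 2 f s) s := by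
    intro s
    have : iteratedDeriv 2 f = deriv (deriv f) := by
      rw [iteratedDeriv_succ, iteratedDeriv_one]
    rw [this]
    exact (hd2 s).hasDerivAt
  -- the auxiliary monotone function
  set g : ℝ → ℝ := fun s => Real.exp (-δ * s) * (deriv f s + δ * f s) with hg_def
  have hg_deriv : ∀ s, HasDerivAt g
      (Real.exp (-δ * s) * (iteratedDeriv 2 f s - δ ^ 2 * f s)) s := by
    intro s
    have he : HasDerivAt (fun s : ℝ => Real.exp (-δ * s)) (-δ * Real.exp (-δ * s)) s := by
      have h0 : HasDerivAt (fun s : ℝ => -δ * s) (-δ) s := by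
        simpa using (hasDerivAt_id s).const_mul (-δ)
      simpa [mul_comm] using h0.exp
    have hu : HasDerivAt (fun s => deriv f s + δ * f s)
        (iteratedDeriv 2 f s + δ * deriv f s) s :=
      (hiter s).add ((hd1 s).hasDerivAt.const_mul δ)
    have := he.mul hu
    exact this.congr_deriv (by ring)
  have hg_mono : Monotone g :=
    monotone_of_deriv_nonneg (fun s => (hg_deriv s).differentiableAt)
      (fun s => by
        rw [(hg_deriv s).deriv]
        exact mul_nonneg (Real.exp_nonneg _) (sub_nonneg.mpr (hconv s)))
  -- g is nonpositive everywhere, else f is unbounded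
  have hg_nonpos : ∀ s, g s ≤ 0 := by
    by_contra h
    push_neg at h
    obtain ⟨s₀, hs₀⟩ := h
    set ε := g s₀ with hε_def
    have hε : 0 < ε := hs₀
    -- lower bound on deriv f for s ≥ s₀
    have hderiv_lb : ∀ s, s₀ ≤ s → ε * Real.exp (δ * s) - δ * B ≤ deriv f s := by
      intro s hs
      have h1 : ε ≤ g s := hg_mono hs
      have h2 : ε * Real.exp (δ * s) ≤ deriv f s + δ * f s := by
        have := mul_le_mul_of_nonneg_right h1 (Real.exp_pos (δ * s)).le
        calc ε * Real.exp (δ * s) ≤ g s * Real.exp (δ * s) := this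
          _ = deriv f s + δ * f s := by
              simp only [hg_def]
              rw [mul_comm, ← mul_assoc, ← Real.exp_add]
              ring_nf
              simp
      have h3 : δ * f s ≤ δ * B := mul_le_mul_of_nonneg_left (hB s) hδ.le
      linarith
    -- the comparison function F
    set F : ℝ → ℝ := fun s => f s + δ * B * s - ε / δ * Real.exp (δ * s) with hF_def
    have hF_deriv : ∀ s, HasDerivAt F (deriv f s + δ * B - ε * Real.exp (δ * s)) s := by
      intro s
      have he : HasDerivAt (fun s : ℝ => Real.exp (δ * s)) (δ * Real.exp (δ * s)) s := by
        have h0 : HasDerivAt (fun s : ℝ => δ * s) δ s := by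
          simpa using (hasDerivAt_id s).const_mul δ
        simpa [mul_comm] using h0.exp
      have hlin : HasDerivAt (fun s : ℝ => δ * B * s) (δ * B) s := by
        simpa using (hasDerivAt_id s).const_mul (δ * B)
      have := ((hd1 s).hasDerivAt.add hlin).sub (he.const_mul (ε / δ))
      exact this.congr_deriv (by rw [← mul_assoc, div_mul_cancel₀ _ hδ.ne'])
    have hF_mono : MonotoneOn F (Set.Ici s₀) := by
      apply monotoneOn_of_deriv_nonneg (convex_Ici s₀)
      · exact fun x _ => (hF_deriv x).differentiableAt.continuousAt.continuousWithinAt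
      · exact fun x _ => (hF_deriv x).differentiableAt.differentiableWithinAt
      · intro x hx
        rw [interior_Ici] at hx
        rw [(hF_deriv x).deriv]
        have := hderiv_lb x hx.le
        linarith
    -- `ε/δ * exp (δ s) - δ B s → ∞`
    have htt : Tendsto (fun s => ε / δ * Real.exp (δ * s) - δ * B * s) atTop atTop := by
      have h1 := Real.tendsto_mul_exp_add_div_pow_atTop (ε / δ) 0 1 (by positivity)
      have h2 : Tendsto (fun s : ℝ => δ * s) atTop atTop :=
        (tendsto_id (α := ℝ)).const_mul_atTop hδ
      have h3 := h1.comp h2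
      have h4 := tendsto_atTop_add_const_right atTop (-B) h3
      have h5 := h4.atTop_mul_atTop₀ h2
      apply h5.congr'
      filter_upwards [eventually_gt_atTop (0 : ℝ)] with s hs
      have hδs : δ * s ≠ 0 := by positivity
      simp only [Function.comp_apply]
      field_simp
      ring
    obtain ⟨s, hs₁, hs₂⟩ :=
      ((htt.eventually_gt_atTop (B - F s₀)).and (eventually_ge_atTop s₀)).exists
    have hFs : F s₀ ≤ F s := hF_mono Set.self_mem_Ici hs₂ hs₂
    have : B < f s := by
      have : f s = F s - δ * B * s + ε / δ * Real.exp (δ * s) := by simp [hF_def]; ring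
      rw [this]
      clear_value ε F
      linarith
    exact absurd (hB s) (not_le.mpr this)
  -- now `exp(δ s) * f s` is antitone
  have hh_deriv : ∀ s, HasDerivAt (fun s => Real.exp (δ * s) * f s)
      (Real.exp (δ * s) * (deriv f s + δ * f s)) s := by
    intro s
    have he : HasDerivAt (fun s : ℝ => Real.exp (δ * s)) (δ * Real.exp (δ * s)) s := by
      have h0 : HasDerivAt (fun s : ℝ => δ * s) δ s := by
        simpa using (hasDerivAt_id s).const_mul δ
      simpa [mul_comm] using h0.exp
    have := he.mul (hd1 s).hasDerivAt
    exact this.congr_deriv (by ring)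
  have hh_anti : Antitone (fun s => Real.exp (δ * s) * f s) := by
    apply antitone_of_deriv_nonpos (fun s => (hh_deriv s).differentiableAt)
    intro s
    rw [(hh_deriv s).deriv]
    have h1 : deriv f s + δ * f s = Real.exp (δ * s) * g s := by
      simp only [hg_def]
      rw [← mul_assoc, ← Real.exp_add]
      simp
    rw [h1]
    have := hg_nonpos s
    have h2 : (0 : ℝ) ≤ Real.exp (δ * s) * Real.exp (δ * s) := by positivity
    nlinarith [Real.exp_pos (δ * s)]
  intro s hs
  have h1 : Real.exp (δ * s) * f s ≤ Real.exp (δ * 0) * f 0 :=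
    hh_anti hs
  rw [mul_zero, Real.exp_zero, one_mul] at h1
  have h2 : Real.exp (-δ * s) > 0 := Real.exp_pos _
  calc f s = Real.exp (-δ * s) * (Real.exp (δ * s) * f s) := by
        rw [← mul_assoc, ← Real.exp_add]
        ring_nf
        simp
    _ ≤ Real.exp (-δ * s) * f 0 := by
        exact mul_le_mul_of_nonneg_left h1 h2.le
    _ = f 0 * Real.exp (-δ * s) := by ring

/-- a bounded nonnegative `C²` function on `ℝ` with `f'' ≥ δ² f`, `δ > 0`,
decays exponentially: `f(s) ≤ C e^{-δ|s|}` for some constant `C ≥ 0`. -/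
theorem stmt_4 (f : ℝ → ℝ) (δ : ℝ) (hδ : 0 < δ)
    (hf : ContDiff ℝ 2 f) (hnonneg : ∀ s, 0 ≤ f s)
    (hbdd : ∃ B : ℝ, ∀ s, f s ≤ B)
    (hconv : ∀ s, δ ^ 2 * f s ≤ iteratedDeriv 2 f s) :
    ∃ C : ℝ, 0 ≤ C ∧ ∀ s, f s ≤ C * Real.exp (-δ * |s|) := by
  obtain ⟨B, hB⟩ := hbdd
  refine ⟨f 0, hnonneg 0, fun s => ?_⟩
  rcases le_or_gt 0 s with hs | hs
  · rw [abs_of_nonneg hs]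
    exact stmt4_aux f δ B hδ hf hB hconv s hs
  · rw [abs_of_neg hs]
    have haux := stmt4_aux (fun x => f (-x)) δ B hδ (hf.comp contDiff_neg)
      (fun x => hB (-x))
      (fun x => by
        rw [iteratedDeriv_comp_neg]
        simpa using hconv (-x))
      (-s) (by linarith)
    simpa using haux
end

section
/- Let u : ℝ² → M be a smooth map with f ∘ u = φ + iψ where f is J-holomorphic and u satisfies ∂_s u + J(∂_t u + v^t(u)) = 0 with v^t = cosθ_ν(t)·v₀ + sinθ_ν(t)·v₁. Then φ and ψ satisfy the perturbed Cauchy–Riemann system ∂_s φ − ∂_t ψ = sinθ_ν(t) · ρ(u) and ∂_s ψ + ∂_t φ = −cosθ_ν(t) · ρ(u), where ρ = |v₀|². -/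
open scoped RealInnerProductSpace

/-- for a solution `u` of `∂_s u + J(∂_t u + v^t(u)) = 0` with
`v^t = cosθ_ν(t)·v₀ + sinθ_ν(t)·v₁`, writing `f ∘ u = φ + iψ` for the `J`-holomorphic
`f`, the functions `φ, ψ` satisfy the perturbed Cauchy–Riemann system
`∂_s φ - ∂_t ψ = sinθ_ν(t)·ρ(u)` and `∂_s ψ + ∂_t φ = -cosθ_ν(t)·ρ(u)`,
where `ρ = |v₀|²`.  (Flat model: `g = ⟪·,·⟫`, `g(·,·) = ω(·,J·)`, `v₀ = grad f₀`,
`v₁ = grad f₁ = J v₀`.) -/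
theorem stmt_13 {E : Type*} [NormedAddCommGroup E] [InnerProductSpace ℝ E]
    (ω : E → E →ₗ[ℝ] E →ₗ[ℝ] ℝ) (J : E → E →ₗ[ℝ] E)
    (hωalt : ∀ m (x : E), ω m x x = 0)
    (hcompat : ∀ m (x y : E), ⟪x, y⟫ = ω m x (J m y))
    (f : E → ℂ) (hf : Differentiable ℝ f)
    (hhol : ∀ m (x : E), fderiv ℝ f m (J m x) = Complex.I * fderiv ℝ f m x)
    (v₀ v₁ : E → E)
    (hv₀ : ∀ m (x : E), ⟪v₀ m, x⟫ = (fderiv ℝ f m x).re)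
    (hv₁ : ∀ m (x : E), ⟪v₁ m, x⟫ = (fderiv ℝ f m x).im)
    (θν : ℝ → ℝ) (u : ℝ × ℝ → E) (hu : Differentiable ℝ u)
    (hFloer : ∀ p : ℝ × ℝ,
      fderiv ℝ u p (1, 0)
        + J (u p) (fderiv ℝ u p (0, 1)
            + (Real.cos (θν p.2) • v₀ (u p) + Real.sin (θν p.2) • v₁ (u p))) = 0)
    (φ ψ : ℝ × ℝ → ℝ)
    (hφ : φ = fun p => (f (u p)).re) (hψ : ψ = fun p => (f (u p)).im) :
    ∀ p : ℝ × ℝ,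
      fderiv ℝ φ p (1, 0) - fderiv ℝ ψ p (0, 1)
          = Real.sin (θν p.2) * ‖v₀ (u p)‖ ^ 2
      ∧ fderiv ℝ ψ p (1, 0) + fderiv ℝ φ p (0, 1)
          = -(Real.cos (θν p.2) * ‖v₀ (u p)‖ ^ 2) := by

  intro p
  set m := u p with hm
  set D := fderiv ℝ f m with hD
  set Du := fderiv ℝ u p with hDu
  -- derivatives of φ and ψ
  have hc : HasFDerivAt (fun q => f (u q)) (D.comp Du) p :=
    ((hf m).hasFDerivAt).comp p ((hu p).hasFDerivAt)
  have hφfd : HasFDerivAt φ (Complex.reCLM.comp (D.comp Du)) p := by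
    rw [hφ]; exact (Complex.reCLM.hasFDerivAt).comp p hc
  have hψfd : HasFDerivAt ψ (Complex.imCLM.comp (D.comp Du)) p := by
    rw [hψ]; exact (Complex.imCLM.hasFDerivAt).comp p hc
  have hφ' : ∀ x, fderiv ℝ φ p x = (D (Du x)).re := by
    intro x; rw [hφfd.fderiv]; rfl
  have hψ' : ∀ x, fderiv ℝ ψ p x = (D (Du x)).im := by
    intro x; rw [hψfd.fderiv]; rfl
  -- algebraic identities
  have hskew : ∀ (x y : E), ω m x y = - ω m y x := by
    intro x y
    have h := hωalt m (x + y)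
    simp only [map_add, LinearMap.add_apply, hωalt m x, hωalt m y] at h
    linarith
  have hA : ∀ x : E, ⟪v₁ m, J m x⟫ = ⟪v₀ m, x⟫ := by
    intro x
    rw [hv₁ m, hv₀ m, hhol m x]
    simp [Complex.mul_im]
  have hB : ∀ x : E, ⟪v₀ m, J m x⟫ = -⟪v₁ m, x⟫ := by
    intro x
    rw [hv₀ m, hv₁ m, hhol m x]
    simp [Complex.mul_re]
  have hortho : ⟪v₁ m, v₀ m⟫ = 0 := by
    have h1 := hB (v₀ m)
    have h2 : ⟪v₀ m, J m (v₀ m)⟫ = ω m (J m (v₀ m)) (J m (v₀ m)) := by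
      rw [real_inner_comm]; exact hcompat m _ _
    rw [hωalt m] at h2
    linarith [h1, h2]
  have hnorm : ⟪v₁ m, v₁ m⟫ = ⟪v₀ m, v₀ m⟫ := by
    have h1 := hA (v₀ m)
    have h2 := hB (v₁ m)
    have e1 : ⟪v₁ m, J m (v₀ m)⟫ = ω m (J m (v₀ m)) (J m (v₁ m)) := by
      rw [real_inner_comm]; exact hcompat m _ _
    have e2 : ⟪v₀ m, J m (v₁ m)⟫ = ω m (J m (v₁ m)) (J m (v₀ m)) := by
      rw [real_inner_comm]; exact hcompat m _ _
    have e3 := hskew (J m (v₀ m)) (J m (v₁ m))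
    linarith [h1, h2, e1, e2, e3]
  -- Floer equation rearranged
  set c := Real.cos (θν p.2) with hcdef
  set s := Real.sin (θν p.2) with hsdef
  set V : E := c • v₀ m + s • v₁ m with hV
  have hF : Du (1, 0) = J m (-(Du (0, 1) + V)) := by
    have h := hFloer p
    rw [map_neg]
    exact eq_neg_of_add_eq_zero_left h
  -- key complex computations
  have hre : ∀ x : E, (D x).re = ⟪v₀ m, x⟫ := fun x => (hv₀ m x).symm
  have him : ∀ x : E, (D x).im = ⟪v₁ m, x⟫ := fun x => (hv₁ m x).symm
  have hDv₀ : D (v₀ m) = (⟪v₀ m, v₀ m⟫ : ℝ) := by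
    apply Complex.ext
    · rw [hre]; simp [← Complex.ofReal_pow]
    · rw [him]; simp [hortho, ← Complex.ofReal_pow]
  have hDv₁ : D (v₁ m) = Complex.I * (⟪v₀ m, v₀ m⟫ : ℝ) := by
    have h0 : ⟪v₀ m, v₁ m⟫ = 0 := by rw [real_inner_comm]; exact hortho
    apply Complex.ext
    · rw [hre]; simp [h0, ← Complex.ofReal_pow]
    · rw [him, hnorm]; simp [← Complex.ofReal_pow]
  have hDs : D (Du (1, 0)) = -(Complex.I * (D (Du (0, 1)) + D V)) := by
    rw [hF, hhol m]
    rw [map_neg, map_add]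
    ring
  have hDV : D V = c * ((⟪v₀ m, v₀ m⟫ : ℝ) : ℂ) + s * (Complex.I * ((⟪v₀ m, v₀ m⟫ : ℝ) : ℂ)) := by
    rw [hV, map_add, map_smul, map_smul, hDv₀, hDv₁]
    simp [Complex.real_smul]
  have hρ : ⟪v₀ m, v₀ m⟫ = ‖v₀ (u p)‖ ^ 2 := by
    rw [← hm]; exact real_inner_self_eq_norm_sq _
  rw [hφ' (1,0), hφ' (0,1), hψ' (1,0), hψ' (0,1), hDs, hDV, ← hρ]
  constructor
  · simp [Complex.add_re, Complex.add_im, Complex.mul_im, Complex.mul_re, ← Complex.ofReal_pow]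
    try ring
  · simp [Complex.add_re, Complex.add_im, Complex.mul_im, Complex.mul_re, ← Complex.ofReal_pow]
    try ring
end
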